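/- Let $H$ be a reductive group acting faithfully on a finite-dimensional symplectic vector space $V$ preserving the symplectic form. If the algebra of $H$-invariant polynomial functions on $V$ consists only of constants, then the center of $H$ is finite and hence $H$ is semisimple. -/

import Mathlib

open Module

variable (k : Type*) [Field k]

/-- The algebra of polynomial functions on a finite-dimensional vector space `V`:
the subalgebra of `V → k` generated by the linear functionals. -/
def polyFun (V : Type*) [AddCommGroup V] [Module k V] : Subalgebra k (V → k) :=
  Algebra.adjoin k {f : V → k | ∃ φ : Module.Dual k V, f = ⇑φ}

variable {V : Type*} [AddCommGroup V] [Module k V]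

/-- The symplectic group of a symplectic form `ω` on `V`, as a subgroup of `GL(V)`. -/
def Sp (ω : V →ₗ[k] V →ₗ[k] k) : Subgroup (V ≃ₗ[k] V) where
  carrier := {g | ∀ v w : V, ω (g v) (g w) = ω v w}
  mul_mem' := by
    intro a b ha hb v w
    exact (ha (b v) (b w)).trans (hb v w)
  one_mem' := by intro v w; rfl
  inv_mem' := by
    intro a ha v w
    have h1 : a ((a⁻¹ : V ≃ₗ[k] V) v) = v := a.apply_symm_apply v
    have h2 : a ((a⁻¹ : V ≃ₗ[k] V) w) = w := a.apply_symm_apply w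
    have h3 := ha ((a⁻¹ : V ≃ₗ[k] V) v) ((a⁻¹ : V ≃ₗ[k] V) w)
    rw [h1, h2] at h3
    exact h3.symm

/-- `H ≤ GL(V)` is Zariski closed (inside `End V`; this is the appropriate notion for
subgroups of the symplectic group, which is itself closed in `End V`). -/
def IsZariskiClosed (H : Subgroup (V ≃ₗ[k] V)) : Prop :=
  ∀ g : V ≃ₗ[k] V,
    (∀ p ∈ polyFun k (Module.End k V),
      (∀ h ∈ H, p (h : Module.End k V) = 0) → p (g : Module.End k V) = 0) → g ∈ H

/-- A Zariski-closed subgroup `H ≤ GL(V)` (acting faithfully on `V`) is reductive in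
characteristic zero iff its (faithful) representation on `V` is completely reducible. -/
def IsReductiveSubgroup (H : Subgroup (V ≃ₗ[k] V)) : Prop :=
  IsZariskiClosed k H ∧
    ∀ W : Submodule k V, (∀ g ∈ H, ∀ v ∈ W, g v ∈ W) →
      ∃ W' : Submodule k V, IsCompl W W' ∧ ∀ g ∈ H, ∀ v ∈ W', g v ∈ W'

/-- A linear group is semisimple if it is reductive with finite centre. -/
def IsSemisimpleSubgroup (H : Subgroup (V ≃ₗ[k] V)) : Prop :=
  IsReductiveSubgroup k H ∧ Finite (Subgroup.center H)


open Module LinearMap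

section Aux

variable {k : Type*} [Field k] [CharZero k]
variable {V : Type*} [AddCommGroup V] [Module k V] [FiniteDimensional k V]

private lemma invol_proj_plus (u : Module.End k V) (hu : u * u = 1) :
    LinearMap.IsProj (LinearMap.ker (u - 1)) ((2⁻¹ : k) • (1 + u)) := by
  constructor
  · intro x
    have h2 : u (u x) = x := by
      have := congrArg (fun f : Module.End k V => f x) hu
      simpa [Module.End.mul_apply] using this
    simp [LinearMap.mem_ker, Module.End.mul_apply, smul_add, h2, map_add, map_smul]
    module
  · intro x hx
    have hx' : u x = x := by
      have := hx
      simp only [LinearMap.mem_ker, LinearMap.sub_apply, Module.End.one_apply,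
        sub_eq_zero] at this
      exact this
    have : ((2⁻¹ : k) • (1 + u)) x = (2⁻¹ : k) • (x + u x) := by
      simp [smul_add]
    rw [this, hx']
    module

private lemma invol_proj_minus (u : Module.End k V) (hu : u * u = 1) :
    LinearMap.IsProj (LinearMap.ker (u + 1)) ((2⁻¹ : k) • (1 - u)) := by
  constructor
  · intro x
    have h2 : u (u x) = x := by
      have := congrArg (fun f : Module.End k V => f x) hu
      simpa [Module.End.mul_apply] using this
    simp [LinearMap.mem_ker, Module.End.mul_apply, smul_sub, h2, map_sub, map_smul]
    module
  · intro x hx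
    have hx' : u x = -x := by
      have := hx
      simp only [LinearMap.mem_ker, LinearMap.add_apply, Module.End.one_apply,
        add_eq_zero_iff_eq_neg] at this
      exact this
    have : ((2⁻¹ : k) • (1 - u)) x = (2⁻¹ : k) • (x - u x) := by
      simp [smul_sub]
    rw [this, hx']
    module

private lemma invol_trace (u : Module.End k V) (hu : u * u = 1) :
    LinearMap.trace k V u =
      (finrank k (LinearMap.ker (u - 1)) : k) - finrank k (LinearMap.ker (u + 1)) := by
  have hplus := LinearMap.IsProj.trace (invol_proj_plus u hu)
  have hminus := LinearMap.IsProj.trace (invol_proj_minus u hu)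
  have hdiff : u = (2⁻¹ : k) • (1 + u) - (2⁻¹ : k) • (1 - u) := by
    rw [← smul_sub]
    have : (1 + u) - (1 - u) = (2 : k) • u := by
      rw [two_smul]; abel
    rw [this, smul_smul]
    norm_num
  conv_lhs => rw [hdiff]
  rw [map_sub, hplus, hminus]

private lemma invol_isCompl (u : Module.End k V) (hu : u * u = 1) :
    IsCompl (LinearMap.ker (u - 1)) (LinearMap.ker (u + 1)) := by
  have h2 : ∀ x, u (u x) = x := fun x => by
    have := congrArg (fun f : Module.End k V => f x) hu
    simpa [Module.End.mul_apply] using this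
  constructor
  · rw [Submodule.disjoint_def]
    intro x hx₁ hx₂
    simp only [LinearMap.mem_ker, LinearMap.sub_apply, LinearMap.add_apply,
      Module.End.one_apply, sub_eq_zero, add_eq_zero_iff_eq_neg] at hx₁ hx₂
    have hxx : x = -x := hx₁.symm.trans hx₂
    have h2x : (2 : k) • x = 0 := by
      rw [two_smul]
      nth_rewrite 1 [hxx]
      simp
    simpa using (smul_eq_zero.mp h2x).resolve_left (by norm_num)
  · rw [codisjoint_iff, eq_top_iff]
    intro v _
    have ha : (2⁻¹ : k) • (v + u v) ∈ LinearMap.ker (u - 1) := by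
      simp [LinearMap.mem_ker, map_add, map_smul, h2 v, smul_add]
      module
    have hb : (2⁻¹ : k) • (v - u v) ∈ LinearMap.ker (u + 1) := by
      simp [LinearMap.mem_ker, map_sub, map_smul, h2 v, smul_sub]
      module
    have : (2⁻¹ : k) • (v + u v) + (2⁻¹ : k) • (v - u v) = v := by module
    exact this ▸ Submodule.add_mem_sup ha hb

private lemma invol_eq_one (u : Module.End k V) (hu : u * u = 1)
    (ht : LinearMap.trace k V u = (finrank k V : k)) : u = 1 := by
  have hsum : finrank k (LinearMap.ker (u - 1)) + finrank k (LinearMap.ker (u + 1))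
      = finrank k V := Submodule.finrank_add_eq_of_isCompl (invol_isCompl u hu)
  have htr := invol_trace u hu
  rw [ht] at htr
  have hzero : (finrank k (LinearMap.ker (u + 1)) : k) = 0 := by
    have hcast : ((finrank k (LinearMap.ker (u - 1)) : k) +
        (finrank k (LinearMap.ker (u + 1)) : k)) = (finrank k V : k) := by
      exact_mod_cast congrArg (fun n : ℕ => (n : k)) hsum
    linear_combination (hcast + htr) / 2
  have hzero' : finrank k (LinearMap.ker (u + 1)) = 0 := by exact_mod_cast hzero
  have hbot : LinearMap.ker (u + 1) = ⊥ := Submodule.finrank_eq_zero.mp hzero'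
  have h2 : ∀ x, u (u x) = x := fun x => by
    have := congrArg (fun f : Module.End k V => f x) hu
    simpa [Module.End.mul_apply] using this
  ext v
  have hb : (2⁻¹ : k) • (v - u v) ∈ LinearMap.ker (u + 1) := by
    simp [LinearMap.mem_ker, map_sub, map_smul, h2 v, smul_sub]
    abel
  rw [hbot, Submodule.mem_bot, smul_eq_zero] at hb
  have := hb.resolve_left (by norm_num)
  have := sub_eq_zero.mp this
  simp [← this]

private lemma finite_commuting_involutions (S : Set (Module.End k V))
    (hmul : ∀ a ∈ S, ∀ b ∈ S, a * b ∈ S)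
    (hcomm : ∀ a ∈ S, ∀ b ∈ S, a * b = b * a)
    (hsq : ∀ a ∈ S, a * a = 1) : S.Finite := by
  obtain ⟨s, hs, hspan, hindep⟩ := exists_linearIndependent k S
  have hsfin : s.Finite := hindep.set_finite_of_isNoetherian
  set n := finrank k V with hn
  have hinvsq : ∀ a ∈ S, ∀ b ∈ S, (a * b) * (a * b) = 1 := by
    intro a ha b hb
    calc (a * b) * (a * b) = a * (b * a) * b := by simp only [mul_assoc]
      _ = a * (a * b) * b := by rw [hcomm b hb a ha]
      _ = (a * a) * (b * b) := by simp only [mul_assoc]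
      _ = 1 := by rw [hsq a ha, hsq b hb, one_mul]
  have : Finite S := by
    haveI := hsfin.to_subtype
    have hltn : ∀ (u : Module.End k V), finrank k (LinearMap.ker (u - 1)) < n + 1 :=
      fun u => Nat.lt_succ_of_le (Submodule.finrank_le _)
    refine Finite.of_injective
      (fun z : S => fun b : s => (⟨finrank k (LinearMap.ker ((z : Module.End k V) * (b : Module.End k V) - 1)),
        hltn _⟩ : Fin (n + 1))) ?_
    intro z z' h
    have htr : ∀ x ∈ Submodule.span k s,
        LinearMap.trace k V ((z : Module.End k V) * x)
          = LinearMap.trace k V ((z' : Module.End k V) * x) := by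
      intro x hx
      induction hx using Submodule.span_induction with
      | mem b hb =>
        have hbS : b ∈ S := hs hb
        have hzb : ((z : Module.End k V) * b) * ((z : Module.End k V) * b) = 1 :=
          hinvsq _ z.2 _ hbS
        have hzb' : ((z' : Module.End k V) * b) * ((z' : Module.End k V) * b) = 1 :=
          hinvsq _ z'.2 _ hbS
        have heq : finrank k (LinearMap.ker ((z : Module.End k V) * b - 1))
            = finrank k (LinearMap.ker ((z' : Module.End k V) * b - 1)) := by
          have := congrFun h ⟨b, hb⟩
          exact Fin.mk.inj_iff.mp this
        have heq' : finrank k (LinearMap.ker ((z : Module.End k V) * b + 1))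
            = finrank k (LinearMap.ker ((z' : Module.End k V) * b + 1)) := by
          have h1 := Submodule.finrank_add_eq_of_isCompl (invol_isCompl _ hzb)
          have h2 := Submodule.finrank_add_eq_of_isCompl (invol_isCompl _ hzb')
          omega
        rw [invol_trace _ hzb, invol_trace _ hzb', heq, heq']
      | zero => simp
      | add x y _ _ hx' hy' => rw [mul_add, mul_add, map_add, map_add, hx', hy']
      | smul c x _ hx' => rw [mul_smul_comm, mul_smul_comm, map_smul, map_smul, hx']
    have hz'span : (z' : Module.End k V) ∈ Submodule.span k s :=
      hspan ▸ Submodule.subset_span z'.2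
    have hfin : LinearMap.trace k V ((z : Module.End k V) * z')
        = LinearMap.trace k V ((z' : Module.End k V) * z') := htr _ hz'span
    rw [hsq _ z'.2, LinearMap.trace_one] at hfin
    have hzz' : ((z : Module.End k V) * z') * ((z : Module.End k V) * z') = 1 :=
      hinvsq _ z.2 _ z'.2
    have hone : (z : Module.End k V) * z' = 1 := invol_eq_one _ hzz' hfin
    have : (z : Module.End k V) = z' := by
      calc (z : Module.End k V) = z * (z' * z') := by rw [hsq _ z'.2, mul_one]
        _ = (z * z') * z' := by rw [mul_assoc]
        _ = z' := by rw [hone, one_mul]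
    exact Subtype.ext this
  exact Set.toFinite S

end Aux

theorem center_finite_of_no_invariants
    {k : Type*} [Field k] [IsAlgClosed k] [CharZero k]
    {V : Type*} [AddCommGroup V] [Module k V] [FiniteDimensional k V]
    (ω : V →ₗ[k] V →ₗ[k] k)
    (halt : ∀ v : V, ω v v = 0)
    (hnondeg : ∀ v : V, (∀ w : V, ω v w = 0) → v = 0)
    (H : Subgroup (V ≃ₗ[k] V)) (hHSp : H ≤ Sp k ω)
    (hred : IsReductiveSubgroup k H)
    (hinv : ∀ p ∈ polyFun k V,
      (∀ g ∈ H, ∀ v : V, p (g v) = p v) → ∃ c : k, p = Function.const V c) :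
    Finite (Subgroup.center H) ∧ IsSemisimpleSubgroup k H := by
  classical
  have hskew : ∀ a b : V, ω a b + ω b a = 0 := by
    intro a b
    have h := halt (a + b)
    simp only [map_add, LinearMap.add_apply] at h
    rw [halt a, halt b] at h
    linear_combination h
  -- Step A: for central z, the invariant quadratic `v ↦ ω (z v) v` vanishes
  have hquad : ∀ z : H, z ∈ Subgroup.center H → ∀ v : V, ω ((z : V ≃ₗ[k] V) v) v = 0 := by
    intro z hz
    set g0 : V ≃ₗ[k] V := (z : V ≃ₗ[k] V) with hg0
    set p : V → k := fun v => ω (g0 v) v with hp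
    let b := Module.finBasis k V
    have hpoly : p ∈ polyFun k V := by
      have hrepr : p = ∑ i, ∑ j,
          (ω (g0 (b i)) (b j)) • ((⇑(b.coord i) : V → k) * ⇑(b.coord j)) := by
        funext v
        have hv : (∑ i, b.repr v i • b i) = v := b.sum_repr v
        calc p v = ω (g0 (∑ i, b.repr v i • b i)) (∑ j, b.repr v j • b j) := by
              rw [hv]
          _ = ∑ j, ∑ i, b.repr v j * (b.repr v i * ω (g0 (b i)) (b j)) := by
              simp [map_sum, map_smul, LinearMap.sum_apply, LinearMap.smul_apply,
                smul_eq_mul, Finset.mul_sum, -Module.Basis.sum_repr]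
          _ = _ := by
              simp only [Finset.sum_apply, Pi.smul_apply, Pi.mul_apply,
                Basis.coord_apply, smul_eq_mul]
              rw [Finset.sum_comm]
              exact Finset.sum_congr rfl fun i _ => Finset.sum_congr rfl fun j _ => by ring
      rw [hrepr]
      refine Subalgebra.sum_mem _ fun i _ => Subalgebra.sum_mem _ fun j _ =>
        Subalgebra.smul_mem _ (mul_mem ?_ ?_) _
      · exact Algebra.subset_adjoin ⟨b.coord i, rfl⟩
      · exact Algebra.subset_adjoin ⟨b.coord j, rfl⟩
    have hinvp : ∀ g ∈ H, ∀ v : V, p (g v) = p v := by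
      intro g hg v
      have hc : (⟨g, hg⟩ : H) * z = z * ⟨g, hg⟩ := Subgroup.mem_center_iff.mp hz ⟨g, hg⟩
      have hc' : g * g0 = g0 * g := congrArg Subtype.val hc
      have hcv : g (g0 v) = g0 (g v) := congrArg (fun e : V ≃ₗ[k] V => e v) hc'
      calc p (g v) = ω (g0 (g v)) (g v) := rfl
        _ = ω (g (g0 v)) (g v) := by rw [hcv]
        _ = ω (g0 v) v := hHSp hg (g0 v) v
        _ = p v := rfl
    obtain ⟨c, hcconst⟩ := hinv p hpoly hinvp
    have hc0 : c = 0 := by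
      have h0 := congrFun hcconst 0
      simp only [hp, Function.const_apply] at h0
      rw [map_zero] at h0
      simpa using h0.symm
    intro v
    have := congrFun hcconst v
    rw [hc0] at this
    exact this
  -- Step B: every central element is an involution
  have hz2 : ∀ z : H, z ∈ Subgroup.center H →
      ∀ v : V, (z : V ≃ₗ[k] V) ((z : V ≃ₗ[k] V) v) = v := by
    intro z hz v
    set g0 : V ≃ₗ[k] V := (z : V ≃ₗ[k] V) with hg0
    have hq := hquad z hz
    have hpolar : ∀ a c : V, ω (g0 a) c + ω (g0 c) a = 0 := by
      intro a c
      have h := hq (a + c)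
      simp only [map_add, LinearMap.add_apply] at h
      rw [hq a, hq c] at h
      linear_combination h
    have hsp : ∀ a c : V, ω (g0 a) (g0 c) = ω a c := hHSp z.2
    have hker : ∀ w : V, ω (g0 (g0 v) - v) w = 0 := by
      intro w
      have h1 := hpolar (g0 v) w
      have h2 := hskew (g0 w) (g0 v)
      have h3 := hsp v w
      have h4 : ω (g0 (g0 v)) w = ω v w := by linear_combination h1 - h2 + h3
      rw [map_sub, LinearMap.sub_apply, h4, sub_self]
    exact sub_eq_zero.mp (hnondeg _ hker)
  -- Step C: the central involutions form a finite commuting set of involutions in End V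
  set e : Subgroup.center H → Module.End k V :=
    fun z => (((z : H) : V ≃ₗ[k] V) : V →ₗ[k] V) with he
  have hsqS : ∀ z : Subgroup.center H, e z * e z = 1 := by
    intro z
    apply LinearMap.ext
    intro v
    exact hz2 (z : H) z.2 v
  have hmulS : ∀ x y : Subgroup.center H, e x * e y = e (x * y) := fun x y => rfl
  have hcommS : ∀ x y : Subgroup.center H, e x * e y = e y * e x := by
    intro x y
    have h := Subgroup.mem_center_iff.mp y.2 (x : H)
    have := congrArg (fun h : H => (((h : V ≃ₗ[k] V)) : V →ₗ[k] V)) h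
    exact this
  have hSfin : (Set.range e).Finite := by
    apply finite_commuting_involutions
    · rintro a ⟨x, rfl⟩ c ⟨y, rfl⟩
      exact ⟨x * y, (hmulS x y).symm⟩
    · rintro a ⟨x, rfl⟩ c ⟨y, rfl⟩
      exact hcommS x y
    · rintro a ⟨x, rfl⟩
      exact hsqS x
  have einj : Function.Injective e := by
    intro a c hac
    exact Subtype.ext (Subtype.ext (LinearEquiv.toLinearMap_injective hac))
  haveI := hSfin.to_subtype
  have hfin : Finite (Subgroup.center H) :=
    Finite.of_injective (fun zz => (⟨e zz, Set.mem_range_self zz⟩ : Set.range e))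
      (fun a c hac => einj (congrArg Subtype.val hac))
  exact ⟨hfin, hred, hfin⟩
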